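/- Let (R, m, k) be a local ring with decomposable maximal ideal m = I ⊕ J (internal direct sum of nonzero ideals). Then R is isomorphic to the fibre product (R/I) ×_k (R/J) over the residue field k. -/

import Mathlib

open IsLocalRing

/-- Ogoma's observation: a local ring `(R, m, k)` with decomposable maximal ideal
`m = I ⊕ J` (internal direct sum of nonzero ideals) is isomorphic to the fibre product
`(R/I) ×ₖ (R/J)` over the residue field `k = R/m`. -/
theorem decomposable_maximal_ideal_fibre_product {R : Type*} [CommRing R] [IsLocalRing R]
    (I J : Ideal R) (hI : I ≠ ⊥) (hJ : J ≠ ⊥) (hdisj : I ⊓ J = ⊥)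
    (hsum : I ⊔ J = maximalIdeal R) :
    Nonempty (R ≃+* (RingHom.eqLocus
      ((Ideal.Quotient.factor (S := I) (T := maximalIdeal R) (le_trans le_sup_left hsum.le)).comp
        (RingHom.fst (R ⧸ I) (R ⧸ J)))
      ((Ideal.Quotient.factor (S := J) (T := maximalIdeal R) (le_trans le_sup_right hsum.le)).comp
        (RingHom.snd (R ⧸ I) (R ⧸ J))))) := by
  set S := RingHom.eqLocus
      ((Ideal.Quotient.factor (S := I) (T := maximalIdeal R) (le_trans le_sup_left hsum.le)).comp
        (RingHom.fst (R ⧸ I) (R ⧸ J)))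
      ((Ideal.Quotient.factor (S := J) (T := maximalIdeal R) (le_trans le_sup_right hsum.le)).comp
        (RingHom.snd (R ⧸ I) (R ⧸ J))) with hS
  have hmem : ∀ r : R, ((Ideal.Quotient.mk I r, Ideal.Quotient.mk J r) : (R ⧸ I) × (R ⧸ J)) ∈ S := by
    intro r
    show Ideal.Quotient.factor (S := I) (T := maximalIdeal R) (le_trans le_sup_left hsum.le)
        (Ideal.Quotient.mk I r) =
      Ideal.Quotient.factor (S := J) (T := maximalIdeal R) (le_trans le_sup_right hsum.le)
        (Ideal.Quotient.mk J r)
    simp [Ideal.Quotient.factor_mk]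
  let f : R →+* S := RingHom.codRestrict ((Ideal.Quotient.mk I).prod (Ideal.Quotient.mk J)) S
    (fun r => hmem r)
  have hinj : Function.Injective f := by
    intro a b hab
    have h1 : Ideal.Quotient.mk I a = Ideal.Quotient.mk I b := congrArg (Prod.fst ∘ Subtype.val) hab
    have h2 : Ideal.Quotient.mk J a = Ideal.Quotient.mk J b := congrArg (Prod.snd ∘ Subtype.val) hab
    have hIm : a - b ∈ I := Ideal.Quotient.eq.mp h1
    have hJm : a - b ∈ J := Ideal.Quotient.eq.mp h2
    have : a - b ∈ (⊥ : Ideal R) := hdisj ▸ ⟨hIm, hJm⟩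
    have := Ideal.mem_bot.mp this
    exact sub_eq_zero.mp this
  have hsurj : Function.Surjective f := by
    rintro ⟨⟨x, y⟩, hxy⟩
    obtain ⟨a, rfl⟩ := Ideal.Quotient.mk_surjective x
    obtain ⟨b, rfl⟩ := Ideal.Quotient.mk_surjective y
    have hab : a - b ∈ maximalIdeal R := by
      have : Ideal.Quotient.factor (S := I) (T := maximalIdeal R) (le_trans le_sup_left hsum.le)
          (Ideal.Quotient.mk I a) = Ideal.Quotient.factor (S := J) (T := maximalIdeal R)
          (le_trans le_sup_right hsum.le) (Ideal.Quotient.mk J b) := hxy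
      simp only [Ideal.Quotient.factor, Ideal.Quotient.lift_mk] at this
      exact Ideal.Quotient.eq.mp this
    rw [← hsum] at hab
    obtain ⟨i, hi, j, hj, hij⟩ := Submodule.mem_sup.mp hab
    refine ⟨a - i, Subtype.ext (Prod.ext ?_ ?_)⟩
    · show Ideal.Quotient.mk I (a - i) = Ideal.Quotient.mk I a
      rw [Ideal.Quotient.eq]; simpa using neg_mem hi
    · show Ideal.Quotient.mk J (a - i) = Ideal.Quotient.mk J b
      rw [Ideal.Quotient.eq]
      have hji : a - i - b = j := by linear_combination -hij
      exact hji ▸ hj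
  exact ⟨RingEquiv.ofBijective f ⟨hinj, hsurj⟩⟩
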